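/- Let A be the adjacency matrix of the path P_n (as a real symmetric matrix) and let a, b ∈ {1,…,n}. If pretty good state transfer occurs between a and b, then a and b are strongly cospectral: for every eigenvalue θ of A, the orthogonal projection E_θ onto the θ-eigenspace of A satisfies E_θ e_a = E_θ e_b or E_θ e_a = −E_θ e_b, where e_a, e_b are standard basis vectors. -/

import Mathlib

open Real Finset

/-- Adjacency matrix of the path `P_n` on vertices `1,…,n` (indexed by `Fin n`),
over the complex numbers: the `(j,k)` entry is `1` iff `|j - k| = 1`. -/
noncomputable def pathAdj (n : ℕ) : Matrix (Fin n) (Fin n) ℂ :=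
  Matrix.of fun j k => if j.val + 1 = k.val ∨ k.val + 1 = j.val then 1 else 0

/-- The transition matrix `U(τ) = exp(iτA)` of the quantum walk on `P_n`. -/
noncomputable def pathU (n : ℕ) (τ : ℝ) : Matrix (Fin n) (Fin n) ℂ :=
  NormedSpace.exp ((Complex.I * (τ : ℂ)) • pathAdj n)

/-- Pretty good state transfer between vertices `a` and `b` of `P_n`. -/
def PGST (n : ℕ) (a b : Fin n) : Prop :=
  ∀ ε : ℝ, 0 < ε → ∃ τ : ℝ, 1 - ε < ‖pathU n τ a b‖

/-- Adjacency matrix of the path `P_n`, as a real symmetric matrix. -/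
noncomputable def pathAdjR (n : ℕ) : Matrix (Fin n) (Fin n) ℝ :=
  Matrix.of fun j k => if j.val + 1 = k.val ∨ k.val + 1 = j.val then 1 else 0

namespace PGSTAux

open Matrix RealInnerProductSpace

lemma pathAdjR_isHermitian (n : ℕ) : (pathAdjR n).IsHermitian := by
  ext j k
  simp only [Matrix.conjTranspose_apply, pathAdjR, Matrix.of_apply, star_trivial]
  exact if_congr or_comm rfl rfl

lemma hSym (n : ℕ) : (Matrix.toEuclideanLin (pathAdjR n)).IsSymmetric :=
  Matrix.isHermitian_iff_isSymmetric.1 (pathAdjR_isHermitian n)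

noncomputable def evB (n : ℕ) : OrthonormalBasis (Fin n) ℝ (EuclideanSpace ℝ (Fin n)) :=
  (hSym n).eigenvectorBasis finrank_euclideanSpace_fin

noncomputable def lam (n : ℕ) : Fin n → ℝ :=
  (hSym n).eigenvalues finrank_euclideanSpace_fin

lemma apply_evB (n : ℕ) (i : Fin n) :
    Matrix.toEuclideanLin (pathAdjR n) (evB n i) = lam n i • evB n i :=
  (hSym n).apply_eigenvectorBasis _ i

lemma mem_eigenspace_evB (n : ℕ) (i : Fin n) :
    evB n i ∈ Module.End.eigenspace (Matrix.toEuclideanLin (pathAdjR n)) (lam n i) :=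
  ((hSym n).hasEigenvector_eigenvectorBasis _ i).1

noncomputable def Vr (n : ℕ) : Matrix (Fin n) (Fin n) ℝ := Matrix.of fun j i => evB n i j

lemma Vr_trans_mul (n : ℕ) : (Vr n)ᵀ * Vr n = 1 := by
  ext i i'
  have := orthonormal_iff_ite.1 (evB n).orthonormal i i'
  rw [PiLp.inner_apply] at this
  simp only [RCLike.inner_apply, starRingEnd_apply, star_trivial] at this
  simp only [Matrix.mul_apply, Matrix.transpose_apply, Vr, Matrix.of_apply, Matrix.one_apply]
  simpa [mul_comm] using this

lemma Vr_mul_trans (n : ℕ) : Vr n * (Vr n)ᵀ = 1 :=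
  mul_eq_one_comm.1 (Vr_trans_mul n)

lemma adj_mul_Vr (n : ℕ) : pathAdjR n * Vr n = Vr n * Matrix.diagonal (lam n) := by
  ext j i
  have h := congrFun (congrArg (WithLp.equiv 2 (Fin n → ℝ)) (apply_evB n i)) j
  change (pathAdjR n *ᵥ (WithLp.equiv 2 (Fin n → ℝ)) ((evB n) i)) j = _ at h
  change _ = lam n i * evB n i j at h
  rw [Matrix.mul_apply, Matrix.mul_diagonal]
  show ∑ k, pathAdjR n j k * evB n i k = Vr n j i * lam n i
  rw [Vr, Matrix.of_apply, mul_comm (evB n i j) (lam n i)]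
  have h2 : (pathAdjR n *ᵥ (WithLp.equiv 2 (Fin n → ℝ)) ((evB n) i)) j
      = ∑ k, pathAdjR n j k * evB n i k := by
    simp [Matrix.mulVec, dotProduct]
  rw [← h2, h]

lemma adj_eq (n : ℕ) : pathAdjR n = Vr n * Matrix.diagonal (lam n) * (Vr n)ᵀ := by
  calc pathAdjR n = pathAdjR n * (Vr n * (Vr n)ᵀ) := by rw [Vr_mul_trans, mul_one]
  _ = (pathAdjR n * Vr n) * (Vr n)ᵀ := by rw [mul_assoc]
  _ = _ := by rw [adj_mul_Vr]

noncomputable def Vc (n : ℕ) : Matrix (Fin n) (Fin n) ℂ := (Vr n).map Complex.ofReal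

lemma pathAdj_eq_map (n : ℕ) : pathAdj n = (pathAdjR n).map Complex.ofReal := by
  ext j k
  simp [pathAdj, pathAdjR, Matrix.map_apply, apply_ite Complex.ofReal]

lemma Vc_map (n : ℕ) : Vc n = (Vr n).map Complex.ofRealHom := rfl

lemma Vc_mul_trans (n : ℕ) : Vc n * (Vc n)ᵀ = 1 := by
  have := congrArg (fun M => M.map Complex.ofRealHom) (Vr_mul_trans n)
  simpa [Matrix.map_mul, Matrix.transpose_map, Vc_map] using this

lemma Vc_trans_mul (n : ℕ) : (Vc n)ᵀ * Vc n = 1 := by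
  have := congrArg (fun M => M.map Complex.ofRealHom) (Vr_trans_mul n)
  simpa [Matrix.map_mul, Matrix.transpose_map, Vc_map] using this

lemma isUnit_Vc (n : ℕ) : IsUnit (Vc n) :=
  ⟨⟨Vc n, (Vc n)ᵀ, Vc_mul_trans n, Vc_trans_mul n⟩, rfl⟩

lemma pathAdj_eq (n : ℕ) :
    pathAdj n = Vc n * Matrix.diagonal (fun i => (lam n i : ℂ)) * (Vc n)ᵀ := by
  rw [pathAdj_eq_map, adj_eq]
  have : ((Vr n * Matrix.diagonal (lam n) * (Vr n)ᵀ)).map Complex.ofRealHom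
      = (Vr n).map Complex.ofRealHom * (Matrix.diagonal (lam n)).map Complex.ofRealHom
        * ((Vr n)ᵀ).map Complex.ofRealHom := by
    rw [Matrix.map_mul, Matrix.map_mul]
  rw [show ((Vr n * Matrix.diagonal (lam n) * (Vr n)ᵀ)).map Complex.ofReal
      = ((Vr n * Matrix.diagonal (lam n) * (Vr n)ᵀ)).map Complex.ofRealHom from rfl, this]
  congr 1
  congr 1
  rw [Matrix.diagonal_map (by simp)]
  rfl

lemma pathU_apply (n : ℕ) (τ : ℝ) (x y : Fin n) :
    pathU n τ x y
      = ∑ i, Complex.exp (Complex.I * τ * lam n i) * (evB n i x : ℂ) * (evB n i y : ℂ) := by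
  have hinv : (Vc n)⁻¹ = (Vc n)ᵀ := Matrix.inv_eq_right_inv (Vc_mul_trans n)
  have hconj : (Complex.I * (τ : ℂ)) • pathAdj n
      = Vc n * Matrix.diagonal (fun i => Complex.I * τ * lam n i) * (Vc n)⁻¹ := by
    have hd : Matrix.diagonal (fun i => Complex.I * τ * lam n i)
        = (Complex.I * (τ:ℂ)) • Matrix.diagonal (fun i => (lam n i : ℂ)) := by
      ext i j
      rcases eq_or_ne i j with rfl | hij
      · simp [mul_assoc]
      · simp [Matrix.diagonal_apply_ne _ hij]
    rw [hinv, pathAdj_eq, hd, Matrix.mul_smul, Matrix.smul_mul]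
  rw [pathU, hconj, Matrix.exp_conj _ _ (isUnit_Vc n), Matrix.exp_diagonal, hinv]
  rw [Matrix.mul_apply]
  refine Finset.sum_congr rfl fun i _ => ?_
  have hVc : ∀ (p q : Fin n), Vc n p q = ((evB n q p : ℝ) : ℂ) := fun p q => rfl
  rw [Matrix.mul_diagonal, Matrix.transpose_apply, Pi.coe_exp, hVc, hVc, ← Complex.exp_eq_exp_ℂ]
  ring

lemma proj_eq (n : ℕ) (θ : ℝ) (z : Fin n) :
    (Submodule.orthogonalProjectionOnto (Module.End.eigenspace (Matrix.toEuclideanLin (pathAdjR n)) θ)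
        (EuclideanSpace.single z 1) : EuclideanSpace ℝ (Fin n))
      = ∑ i ∈ univ.filter (fun i => lam n i = θ), (evB n i z : ℝ) • evB n i := by
  classical
  have hON := orthonormal_iff_ite.1 (evB n).orthonormal
  rw [Submodule.coe_orthogonalProjectionOnto_apply]
  apply Submodule.eq_starProjection_of_mem_of_inner_eq_zero
  · refine Submodule.sum_mem _ fun i hi => Submodule.smul_mem _ _ ?_
    have h := mem_eigenspace_evB n i
    rwa [(Finset.mem_filter.1 hi).2] at h
  · intro w hw
    have hworth : ∀ i : Fin n, lam n i ≠ θ → ⟪evB n i, w⟫ = 0 := by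
      intro i hi
      have hTw : Matrix.toEuclideanLin (pathAdjR n) w = θ • w :=
        Module.End.mem_eigenspace_iff.1 hw
      have h1 : ⟪Matrix.toEuclideanLin (pathAdjR n) (evB n i), w⟫
          = ⟪evB n i, Matrix.toEuclideanLin (pathAdjR n) w⟫ := hSym n _ _
      rw [apply_evB, hTw, real_inner_smul_left, real_inner_smul_right] at h1
      have h2 : (lam n i - θ) * ⟪evB n i, w⟫ = 0 := by ring_nf; linarith [h1]
      rcases mul_eq_zero.1 h2 with h3 | h3
      · exact absurd (sub_eq_zero.1 h3) hi
      · exact h3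
    rw [← (evB n).sum_repr' w, inner_sum]
    refine Finset.sum_eq_zero fun i _ => ?_
    rw [real_inner_smul_right]
    by_cases hi : lam n i = θ
    · have hz : ⟪EuclideanSpace.single z (1:ℝ)
          - ∑ j ∈ univ.filter (fun j => lam n j = θ), (evB n j z : ℝ) • evB n j, evB n i⟫ = 0 := by
        rw [inner_sub_left, sum_inner]
        have h1 : ⟪(EuclideanSpace.single z (1:ℝ) : EuclideanSpace ℝ (Fin n)), evB n i⟫
            = evB n i z := by
          rw [EuclideanSpace.inner_single_left]; simp
        have h2 : ∑ j ∈ univ.filter (fun j => lam n j = θ),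
            ⟪(evB n j z : ℝ) • evB n j, evB n i⟫ = evB n i z := by
          rw [Finset.sum_eq_single i]
          · rw [real_inner_smul_left, hON i i]; simp
          · intro j _ hji
            rw [real_inner_smul_left, hON j i, if_neg hji, mul_zero]
          · intro hnot
            exact absurd (Finset.mem_filter.2 ⟨Finset.mem_univ i, hi⟩) hnot
        rw [h1, h2, sub_self]
      rw [hz, mul_zero]
    · rw [hworth i hi, zero_mul]

lemma main (n : ℕ) (x y : Fin n) (h : PGST n x y) (θ : ℝ) :
    (Submodule.orthogonalProjectionOnto (Module.End.eigenspace (Matrix.toEuclideanLin (pathAdjR n)) θ)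
        (EuclideanSpace.single x 1) =
      Submodule.orthogonalProjectionOnto (Module.End.eigenspace (Matrix.toEuclideanLin (pathAdjR n)) θ)
        (EuclideanSpace.single y 1)) ∨
    (Submodule.orthogonalProjectionOnto (Module.End.eigenspace (Matrix.toEuclideanLin (pathAdjR n)) θ)
        (EuclideanSpace.single x 1) =
      - Submodule.orthogonalProjectionOnto (Module.End.eigenspace (Matrix.toEuclideanLin (pathAdjR n)) θ)
        (EuclideanSpace.single y 1)) := by
  classical
  set α : Fin n → ℝ := fun i => evB n i x with hα
  set β : Fin n → ℝ := fun i => evB n i y with hβ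
  set Θ : Finset ℝ := Finset.image (lam n) univ with hΘ
  set p : ℝ → ℝ := fun t => ∑ i ∈ univ.filter (fun i => lam n i = t), α i ^ 2 with hp
  set q : ℝ → ℝ := fun t => ∑ i ∈ univ.filter (fun i => lam n i = t), β i ^ 2 with hq
  set c : ℝ → ℝ := fun t => ∑ i ∈ univ.filter (fun i => lam n i = t), α i * β i with hc
  have hrow : ∀ z : Fin n, ∑ i, (evB n i z) ^ 2 = 1 := by
    intro z
    have h0 := congrArg (fun M => M z z) (Vr_mul_trans n)
    simp only [Matrix.mul_apply, Matrix.transpose_apply, Vr, Matrix.of_apply,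
      Matrix.one_apply_eq] at h0
    simpa [sq] using h0
  -- the bound on |U(τ)_{xy}|
  have hbound : ∀ τ : ℝ, ‖pathU n τ x y‖ ≤ ∑ t ∈ Θ, |c t| := by
    intro τ
    rw [pathU_apply, ← Finset.sum_fiberwise_of_maps_to
      (fun i _ => Finset.mem_image_of_mem (lam n) (Finset.mem_univ i))
      (fun i => Complex.exp (Complex.I * τ * lam n i) * (α i : ℂ) * (β i : ℂ))]
    refine le_trans (norm_sum_le _ _) (Finset.sum_le_sum fun t ht => ?_)
    have hsum : ∑ i ∈ univ.filter (fun i => lam n i = t),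
        Complex.exp (Complex.I * τ * lam n i) * (α i : ℂ) * (β i : ℂ)
        = Complex.exp (Complex.I * τ * t) * ((c t : ℝ) : ℂ) := by
      rw [hc]
      push_cast
      rw [Finset.mul_sum]
      refine Finset.sum_congr rfl fun i hi => ?_
      rw [(Finset.mem_filter.1 hi).2]
      ring
    rw [hsum, norm_mul, Complex.norm_real, Real.norm_eq_abs]
    have habs : ‖Complex.exp (Complex.I * τ * t)‖ = 1 := by
      rw [Complex.norm_exp]; simp
    rw [habs, one_mul]
  have hm1 : 1 ≤ ∑ t ∈ Θ, |c t| := by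
    by_contra hlt
    push_neg at hlt
    obtain ⟨τ, hτ⟩ := h (1 - ∑ t ∈ Θ, |c t|) (by linarith)
    have := hbound τ
    linarith
  have hpnn : ∀ t, 0 ≤ p t := fun t => Finset.sum_nonneg fun i _ => sq_nonneg _
  have hqnn : ∀ t, 0 ≤ q t := fun t => Finset.sum_nonneg fun i _ => sq_nonneg _
  have hcs : ∀ t, |c t| ≤ sqrt (p t) * sqrt (q t) := by
    intro t
    have h2 := Finset.sum_mul_sq_le_sq_mul_sq (univ.filter (fun i => lam n i = t)) α β
    have h3 : |c t| = sqrt ((c t) ^ 2) := (Real.sqrt_sq_eq_abs _).symm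
    rw [h3, ← Real.sqrt_mul (hpnn t)]
    exact Real.sqrt_le_sqrt h2
  have hsump : ∑ t ∈ Θ, p t = 1 := by
    rw [hp, hΘ]
    rw [Finset.sum_fiberwise_of_maps_to
      (fun i _ => Finset.mem_image_of_mem (lam n) (Finset.mem_univ i)) (fun i => α i ^ 2)]
    exact hrow x
  have hsumq : ∑ t ∈ Θ, q t = 1 := by
    rw [hq, hΘ]
    rw [Finset.sum_fiberwise_of_maps_to
      (fun i _ => Finset.mem_image_of_mem (lam n) (Finset.mem_univ i)) (fun i => β i ^ 2)]
    exact hrow y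
  have hub : ∑ t ∈ Θ, sqrt (p t) * sqrt (q t) ≤ 1 := by
    have h2 := Finset.sum_mul_sq_le_sq_mul_sq Θ (fun t => sqrt (p t)) (fun t => sqrt (q t))
    have h3 : ∑ t ∈ Θ, sqrt (p t) ^ 2 = 1 := by
      rw [← hsump]; exact Finset.sum_congr rfl fun t _ => Real.sq_sqrt (hpnn t)
    have h4 : ∑ t ∈ Θ, sqrt (q t) ^ 2 = 1 := by
      rw [← hsumq]; exact Finset.sum_congr rfl fun t _ => Real.sq_sqrt (hqnn t)
    rw [h3, h4, one_mul] at h2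
    have h5 : 0 ≤ ∑ t ∈ Θ, sqrt (p t) * sqrt (q t) :=
      Finset.sum_nonneg fun t _ => mul_nonneg (Real.sqrt_nonneg _) (Real.sqrt_nonneg _)
    nlinarith
  have hA : ∑ t ∈ Θ, |c t| ≤ ∑ t ∈ Θ, sqrt (p t) * sqrt (q t) :=
    Finset.sum_le_sum fun t _ => hcs t
  have hceq1 : ∑ t ∈ Θ, |c t| = 1 := le_antisymm (le_trans hA hub) hm1
  have hsqrteq1 : ∑ t ∈ Θ, sqrt (p t) * sqrt (q t) = 1 := le_antisymm hub (by linarith)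
  have hterm : ∀ t ∈ Θ, |c t| = sqrt (p t) * sqrt (q t) := by
    have := (Finset.sum_eq_sum_iff_of_le fun t (_ : t ∈ Θ) => hcs t).1
      (hceq1.trans hsqrteq1.symm)
    intro t ht
    exact this t ht
  have hdiff : ∑ t ∈ Θ, (sqrt (p t) - sqrt (q t)) ^ 2 = 0 := by
    have he : ∀ t ∈ Θ, (sqrt (p t) - sqrt (q t)) ^ 2
        = (p t + q t) - 2 * (sqrt (p t) * sqrt (q t)) := by
      intro t _
      rw [sub_sq, Real.sq_sqrt (hpnn t), Real.sq_sqrt (hqnn t)]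
      ring
    rw [Finset.sum_congr rfl he, Finset.sum_sub_distrib, Finset.sum_add_distrib,
      ← Finset.mul_sum, hsump, hsumq, hsqrteq1]
    ring
  have hpq : ∀ t ∈ Θ, p t = q t := by
    intro t ht
    have h6 := (Finset.sum_eq_zero_iff_of_nonneg fun t _ => sq_nonneg _).1 hdiff t ht
    have h7 : sqrt (p t) = sqrt (q t) := sub_eq_zero.1 (pow_eq_zero_iff two_ne_zero |>.1 h6)
    have := congrArg (fun r => r ^ 2) h7
    simpa [Real.sq_sqrt (hpnn t), Real.sq_sqrt (hqnn t)] using this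
  -- now conclude for this θ
  by_cases hθ : θ ∈ Θ
  · have hpqθ : p θ = q θ := hpq θ hθ
    have hcθ : |c θ| = p θ := by
      rw [hterm θ hθ, ← hpqθ, Real.mul_self_sqrt (hpnn θ)]
    rcases abs_eq (hpnn θ) |>.1 hcθ with hcp | hcm
    · left
      rw [← Subtype.coe_inj, proj_eq, proj_eq]
      have hzero : ∑ i ∈ univ.filter (fun i => lam n i = θ), (α i - β i) ^ 2 = 0 := by
        have he : ∑ i ∈ univ.filter (fun i => lam n i = θ), (α i - β i) ^ 2
            = (p θ + q θ) - 2 * c θ := by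
          simp only [hp, hq, hc, Finset.mul_sum, ← Finset.sum_add_distrib,
            ← Finset.sum_sub_distrib]
          exact Finset.sum_congr rfl fun i _ => by ring
        rw [he, hcp, hpqθ]
        ring
      have hab : ∀ i ∈ univ.filter (fun i => lam n i = θ), α i = β i := by
        intro i hi
        have := (Finset.sum_eq_zero_iff_of_nonneg fun i _ => sq_nonneg _).1 hzero i hi
        exact sub_eq_zero.1 (pow_eq_zero_iff two_ne_zero |>.1 this)
      exact Finset.sum_congr rfl fun i hi => by rw [show evB n i x = α i from rfl, hab i hi]
    · right
      rw [← Subtype.coe_inj, Submodule.coe_neg, proj_eq, proj_eq]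
      have hzero : ∑ i ∈ univ.filter (fun i => lam n i = θ), (α i + β i) ^ 2 = 0 := by
        have he : ∑ i ∈ univ.filter (fun i => lam n i = θ), (α i + β i) ^ 2
            = (p θ + q θ) + 2 * c θ := by
          simp only [hp, hq, hc, Finset.mul_sum, ← Finset.sum_add_distrib]
          exact Finset.sum_congr rfl fun i _ => by ring
        rw [he, hcm, hpqθ]
        ring
      have hab : ∀ i ∈ univ.filter (fun i => lam n i = θ), α i = -β i := by
        intro i hi
        have := (Finset.sum_eq_zero_iff_of_nonneg fun i _ => sq_nonneg _).1 hzero i hi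
        have := pow_eq_zero_iff two_ne_zero |>.1 this
        linarith [this]
      rw [← Finset.sum_neg_distrib]
      refine Finset.sum_congr rfl fun i hi => ?_
      rw [show evB n i x = α i from rfl, hab i hi, ← neg_smul]
  · left
    rw [← Subtype.coe_inj, proj_eq, proj_eq]
    have hfib : univ.filter (fun i => lam n i = θ) = (∅ : Finset (Fin n)) := by
      rw [Finset.eq_empty_iff_forall_notMem]
      intro i hi
      exact hθ ((Finset.mem_filter.1 hi).2 ▸ Finset.mem_image_of_mem (lam n) (Finset.mem_univ i))
    rw [hfib]
    simp

end PGSTAux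

/-- If pretty good state transfer occurs between vertices `a` and `b` of `P_n`, then `a` and `b`
are strongly cospectral: for every eigenvalue `θ` of the (real) adjacency matrix, the orthogonal
projection `E_θ` onto the `θ`-eigenspace satisfies `E_θ e_a = E_θ e_b` or `E_θ e_a = -E_θ e_b`. -/
theorem pgst_implies_strongly_cospectral (n : ℕ) (a b : ℕ)
    (ha : 1 ≤ a) (ha' : a ≤ n) (hb : 1 ≤ b) (hb' : b ≤ n)
    (h : PGST n ⟨a - 1, by omega⟩ ⟨b - 1, by omega⟩) :
    ∀ θ : ℝ, Module.End.HasEigenvalue (Matrix.toEuclideanLin (pathAdjR n)) θ →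
      (Submodule.orthogonalProjectionOnto (Module.End.eigenspace (Matrix.toEuclideanLin (pathAdjR n)) θ)
          (EuclideanSpace.single ⟨a - 1, by omega⟩ 1) =
        Submodule.orthogonalProjectionOnto (Module.End.eigenspace (Matrix.toEuclideanLin (pathAdjR n)) θ)
          (EuclideanSpace.single ⟨b - 1, by omega⟩ 1) ∨
       Submodule.orthogonalProjectionOnto (Module.End.eigenspace (Matrix.toEuclideanLin (pathAdjR n)) θ)
          (EuclideanSpace.single ⟨a - 1, by omega⟩ 1) =
        - Submodule.orthogonalProjectionOnto (Module.End.eigenspace (Matrix.toEuclideanLin (pathAdjR n)) θ)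
          (EuclideanSpace.single ⟨b - 1, by omega⟩ 1)) := by
  intro θ _
  exact PGSTAux.main n _ _ h θ
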